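/- Let L ≥ M ≥ 1, ρ ≠ 0, let X₀ ∈ ℂ^{M×L} satisfy X₀ X₀ᴴ = ρ I_M (so M = N for this statement, with Y ∈ ℂ^{N×L}, N = M, and Y X₀ᴴ invertible). Then tr( (I_L − (1/ρ) X₀ᴴ X₀) Yᴴ Y X₀ᴴ ( X₀ Yᴴ Y X₀ᴴ )⁻¹ X₀ Yᴴ Y ) = tr( Y (I_L − (1/ρ) X₀ᴴ X₀) Yᴴ ). -/
import Mathlib


open Matrix

/-- for `L ≥ M ≥ 1`, `ρ ≠ 0`, `X₀ X₀ᴴ = ρ I_M`, `N = M`, and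
`Y X₀ᴴ` invertible, the Rao statistic reduces to a quadratic form:
`tr((I_L − ρ⁻¹ X₀ᴴX₀) Yᴴ Y X₀ᴴ (X₀ Yᴴ Y X₀ᴴ)⁻¹ X₀ Yᴴ Y)
  = tr(Y (I_L − ρ⁻¹ X₀ᴴX₀) Yᴴ)`. -/
theorem rao_statistic_reduction
    {M L : ℕ} (hM : 1 ≤ M) (hML : M ≤ L) (ρ : ℝ) (hρ : ρ ≠ 0)
    (X₀ : Matrix (Fin M) (Fin L) ℂ)
    (hX₀ : X₀ * X₀ᴴ = (ρ : ℂ) • (1 : Matrix (Fin M) (Fin M) ℂ))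
    (Y : Matrix (Fin M) (Fin L) ℂ) (hY : IsUnit (Y * X₀ᴴ)) :
    Matrix.trace (((1 : Matrix (Fin L) (Fin L) ℂ) - ((ρ : ℂ))⁻¹ • (X₀ᴴ * X₀))
        * Yᴴ * Y * X₀ᴴ * (X₀ * Yᴴ * Y * X₀ᴴ)⁻¹ * X₀ * Yᴴ * Y)
      = Matrix.trace (Y * ((1 : Matrix (Fin L) (Fin L) ℂ)
        - ((ρ : ℂ))⁻¹ • (X₀ᴴ * X₀)) * Yᴴ) := by
  have hAd : IsUnit (Y * X₀ᴴ).det := (Matrix.isUnit_iff_isUnit_det _).mp hY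
  have hAHd : IsUnit (Y * X₀ᴴ)ᴴ.det := by
    rw [Matrix.det_conjTranspose]; exact hAd.star
  have hXY : X₀ * Yᴴ = (Y * X₀ᴴ)ᴴ := by
    rw [conjTranspose_mul, conjTranspose_conjTranspose]
  have hmid : X₀ * Yᴴ * Y * X₀ᴴ = (Y * X₀ᴴ)ᴴ * (Y * X₀ᴴ) := by
    rw [Matrix.mul_assoc, hXY]
  have key : Y * X₀ᴴ * ((X₀ * Yᴴ * Y * X₀ᴴ)⁻¹ * (X₀ * Yᴴ)) = 1 := by
    rw [hmid, hXY, Matrix.mul_inv_rev]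
    simp only [Matrix.mul_assoc]
    rw [Matrix.nonsing_inv_mul _ hAHd, Matrix.mul_one,
      ← Matrix.mul_assoc, Matrix.mul_nonsing_inv _ hAd]
  rw [Matrix.trace_mul_comm]
  simp only [Matrix.mul_assoc] at key ⊢
  rw [key, Matrix.mul_one]
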